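/- Let P ∈ Π_3 be the permutation matrix of the 3-cycle sending index 1 to 2, 2 to 3, and 3 to 1. Then every symmetric matrix A ∈ ℝ^{3×3} satisfying A = PᵀAP has all diagonal entries equal and all off-diagonal entries equal, and consequently Aut(A) = Π_3. In particular, for the cyclic subgroup G = {I₃, P, P²} of Π_3 there is no symmetric A with Aut(A) = G, i.e., 𝒜(G) = ∅ and G is not a symmetry group. -/

import Mathlib

/- Setting: graphs are symmetric real n×n matrices. `pm n σ` is the permutation
matrix of `σ` (entry (i,j) equals 1 iff σ j = i, so it "sends j to σ j").
`DS n` is the set of doubly stochastic matrices, `Aut A` the set of permutation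
matrices commuting with `A`, and `AutConv A` its doubly stochastic relaxation. -/

open Matrix MeasureTheory Finset

noncomputable section

def pm (n : ℕ) (σ : Equiv.Perm (Fin n)) : Matrix (Fin n) (Fin n) ℝ :=
  Matrix.of fun i j => if σ j = i then (1 : ℝ) else 0

def IsPermMatrix {n : ℕ} (P : Matrix (Fin n) (Fin n) ℝ) : Prop :=
  ∃ σ : Equiv.Perm (Fin n), P = pm n σ

def DS (n : ℕ) : Set (Matrix (Fin n) (Fin n) ℝ) :=
  {S | (∀ i j, 0 ≤ S i j) ∧ (∀ i, ∑ j, S i j = 1) ∧ (∀ j, ∑ i, S i j = 1)}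

def Aut {n : ℕ} (A : Matrix (Fin n) (Fin n) ℝ) : Set (Matrix (Fin n) (Fin n) ℝ) :=
  {P | IsPermMatrix P ∧ A * P = P * A}

def AutConv {n : ℕ} (A : Matrix (Fin n) (Fin n) ℝ) : Set (Matrix (Fin n) (Fin n) ℝ) :=
  {S | S ∈ DS n ∧ A * S = S * A}

def matSet {n : ℕ} (G : Subgroup (Equiv.Perm (Fin n))) : Set (Matrix (Fin n) (Fin n) ℝ) :=
  (pm n) '' (G : Set (Equiv.Perm (Fin n)))

/-- `𝒜(G)`: symmetric matrices whose automorphism group is exactly `G`. -/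
def AcalA {n : ℕ} (G : Subgroup (Equiv.Perm (Fin n))) : Set (Matrix (Fin n) (Fin n) ℝ) :=
  {A | A.IsSymm ∧ Aut A = matSet G}

/-- `finRotate 3` is the 3-cycle 0 ↦ 1 ↦ 2 ↦ 0. Every symmetric `A` with
`A = PᵀAP` for its permutation matrix `P` has all diagonal entries equal and all
off-diagonal entries equal, hence `Aut A = Π₃` (all permutation matrices). Consequently
the cyclic subgroup generated by this 3-cycle is not a symmetry group: `𝒜(G) = ∅`. -/

lemma mul_pm_apply {n : ℕ} (A : Matrix (Fin n) (Fin n) ℝ) (σ : Equiv.Perm (Fin n)) (i j : Fin n) :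
    (A * pm n σ) i j = A i (σ j) := by
  simp [Matrix.mul_apply, pm, mul_ite, mul_one, mul_zero]

lemma pm_mul_apply {n : ℕ} (A : Matrix (Fin n) (Fin n) ℝ) (σ : Equiv.Perm (Fin n)) (i j : Fin n) :
    (pm n σ * A) i j = A (σ⁻¹ i) j := by
  simp [Matrix.mul_apply, pm, ite_mul, one_mul, zero_mul, Equiv.apply_eq_iff_eq_symm_apply,
    Equiv.Perm.inv_def]

lemma pmT_mul_apply {n : ℕ} (A : Matrix (Fin n) (Fin n) ℝ) (σ : Equiv.Perm (Fin n)) (i j : Fin n) :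
    ((pm n σ)ᵀ * A) i j = A (σ i) j := by
  simp [Matrix.mul_apply, pm, Matrix.transpose_apply, ite_mul, one_mul, zero_mul]

lemma pm_inj {n : ℕ} {σ τ : Equiv.Perm (Fin n)} (h : pm n σ = pm n τ) : σ = τ := by
  refine Equiv.ext fun j => ?_
  have := congrFun (congrFun h (σ j)) j
  simp [pm] at this
  by_contra hne
  exact hne this.symm

lemma pmT_mul_pm {n : ℕ} (σ : Equiv.Perm (Fin n)) : (pm n σ)ᵀ * pm n σ = 1 := by
  ext i j
  simp [Matrix.mul_apply, pm, Matrix.transpose_apply, Matrix.one_apply, ite_and,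
    EmbeddingLike.apply_eq_iff_eq, eq_comm]

lemma key (A : Matrix (Fin 3) (Fin 3) ℝ) (hs : A.IsSymm)
    (hc : (pm 3 (finRotate 3))ᵀ * A * pm 3 (finRotate 3) = A) :
    ∀ i j, A i j = if i = j then A 0 0 else A 0 1 := by
  have hA : ∀ i j, A (finRotate 3 i) (finRotate 3 j) = A i j := fun i j => by
    have := congrFun (congrFun hc i) j
    rwa [mul_pm_apply, pmT_mul_apply] at this
  have hsym : ∀ i j, A j i = A i j := fun i j => by
    have := congrFun (congrFun hs j) i
    simpa using this.symm
  have e0 : (finRotate 3) (0 : Fin 3) = 1 := by decide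
  have e1 : (finRotate 3) (1 : Fin 3) = 2 := by decide
  have e2 : (finRotate 3) (2 : Fin 3) = 0 := by decide
  have h1 : A 1 1 = A 0 0 := by have := hA 0 0; rwa [e0] at this
  have h2 : A 2 2 = A 1 1 := by have := hA 1 1; rwa [e1] at this
  have h3 : A 1 2 = A 0 1 := by have := hA 0 1; rwa [e0, e1] at this
  have h4 : A 2 0 = A 1 2 := by have := hA 1 2; rwa [e1, e2] at this
  intro i j
  fin_cases i <;> fin_cases j <;>
    simp <;> linarith [h1, h2, h3, h4, hsym 0 1, hsym 0 2, hsym 1 2]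

lemma mainPart (A : Matrix (Fin 3) (Fin 3) ℝ) (hs : A.IsSymm)
    (hc : (pm 3 (finRotate 3))ᵀ * A * pm 3 (finRotate 3) = A) :
    (∀ i j, A i i = A j j) ∧
    (∀ i j k l, i ≠ j → k ≠ l → A i j = A k l) ∧
    Aut A = {P | IsPermMatrix P} := by
  have hk := key A hs hc
  refine ⟨fun i j => by rw [hk i i, hk j j]; simp, fun i j k l hij hkl => by
    rw [hk i j, hk k l]; simp [hij, hkl], ?_⟩
  ext P
  constructor
  · exact fun hP => hP.1
  · intro hP
    refine ⟨hP, ?_⟩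
    obtain ⟨σ, rfl⟩ := hP
    ext i j
    rw [mul_pm_apply, pm_mul_apply, hk i (σ j), hk (σ⁻¹ i) j]
    simp only [Equiv.Perm.inv_def, Equiv.symm_apply_eq]

theorem stmt19 :
    (∀ A : Matrix (Fin 3) (Fin 3) ℝ, A.IsSymm →
      (pm 3 (finRotate 3))ᵀ * A * pm 3 (finRotate 3) = A →
        ((∀ i j, A i i = A j j) ∧
         (∀ i j k l, i ≠ j → k ≠ l → A i j = A k l) ∧
         Aut A = {P | IsPermMatrix P})) ∧
    AcalA (Subgroup.zpowers (finRotate 3)) = ∅ := by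
  refine ⟨mainPart, ?_⟩
  ext A
  simp only [Set.mem_empty_iff_false, iff_false]
  rintro ⟨hs, hAut⟩
  have hPmem : pm 3 (finRotate 3) ∈ Aut A := by
    rw [hAut]
    exact ⟨finRotate 3, Subgroup.mem_zpowers _, rfl⟩
  have hcomm := hPmem.2
  have hc : (pm 3 (finRotate 3))ᵀ * A * pm 3 (finRotate 3) = A := by
    calc (pm 3 (finRotate 3))ᵀ * A * pm 3 (finRotate 3)
        = (pm 3 (finRotate 3))ᵀ * (A * pm 3 (finRotate 3)) := by rw [mul_assoc]
      _ = (pm 3 (finRotate 3))ᵀ * (pm 3 (finRotate 3) * A) := by rw [hcomm]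
      _ = ((pm 3 (finRotate 3))ᵀ * pm 3 (finRotate 3)) * A := by rw [mul_assoc]
      _ = A := by rw [pmT_mul_pm, one_mul]
  have hall := (mainPart A hs hc).2.2
  have hswap : pm 3 (Equiv.swap 0 1) ∈ Aut A := by
    rw [hall]; exact ⟨Equiv.swap 0 1, rfl⟩
  rw [hAut] at hswap
  obtain ⟨τ, hτG, hτ⟩ := hswap
  obtain ⟨k, hk⟩ := hτG
  rw [pm_inj hτ] at hk
  have ho : (finRotate 3) ^ (3 : ℕ) = 1 := by decide
  have h3 : Equiv.swap (0 : Fin 3) 1 ^ (3 : ℕ) = 1 := by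
    rw [← hk, ← zpow_natCast ((finRotate 3) ^ k) 3, ← _root_.zpow_mul, mul_comm, _root_.zpow_mul,
      zpow_natCast, ho, _root_.one_zpow]
  exact absurd h3 (by decide)
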